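/- Let C be an object of 𝒞 and let X → Y → C --d--> ΣX be an Auslander-Reiten triangle in 𝒯. Suppose α : A → X is a 𝒞-cover. Then A is either a zero object or indecomposable (i.e., A is non-zero and in any direct sum decomposition A ≅ A₁ ⊕ A₂, one of A₁, A₂ is a zero object). -/

import Mathlib

open CategoryTheory CategoryTheory.Limits CategoryTheory.Pretriangulated

universe v u

variable {k : Type} [Field k]
variable {T : Type u} [Category.{v} T] [Preadditive T] [Linear k T]
  [HasZeroObject T] [HasShift T ℤ] [∀ n : ℤ, (shiftFunctor T n).Additive]
  [Pretriangulated T]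

/-- `α : A ⟶ X` is an `S`-precover of `X`. -/
def IsPrecover (S : Set T) {A X : T} (α : A ⟶ X) : Prop :=
  A ∈ S ∧ ∀ A' : T, A' ∈ S → ∀ f : A' ⟶ X, ∃ g : A' ⟶ A, g ≫ α = f

/-- `α : A ⟶ X` is an `S`-cover: a right-minimal `S`-precover. -/
def IsCover (S : Set T) {A X : T} (α : A ⟶ X) : Prop :=
  IsPrecover S α ∧ ∀ f : A ⟶ A, f ≫ α = α → IsIso f

/-- `X ⟶ Y ⟶ Z --d--> ΣX` is an Auslander-Reiten triangle in `T`. -/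
def IsARTriangle {X Y Z : T} (f : X ⟶ Y) (g : Y ⟶ Z) (d : Z ⟶ X⟦(1 : ℤ)⟧) : Prop :=
  (Triangle.mk f g d ∈ distTriang T) ∧ d ≠ 0 ∧
    (∀ (X' : T) (u : X ⟶ X'), ¬(∃ v : X' ⟶ X, u ≫ v = 𝟙 X) → ∃ w : Y ⟶ X', f ≫ w = u) ∧
    (∀ (Z' : T) (u : Z' ⟶ Z), ¬(∃ v : Z ⟶ Z', v ≫ u = 𝟙 Z) → ∃ w : Z' ⟶ Y, w ≫ g = u)

/-- Any nonzero map `β : A₀ ⟶ X` into the first object of an AR triangle admits a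
factorization `d = ξ ≫ Σβ` of the connecting morphism. -/
lemma ar_factor_through_shift {X Y C : T} {f : X ⟶ Y} {g : Y ⟶ C} {d : C ⟶ X⟦(1 : ℤ)⟧}
    (hAR : IsARTriangle f g d) {A₀ : T} (β : A₀ ⟶ X) (hβ : β ≠ 0) :
    ∃ ξ : C ⟶ A₀⟦(1 : ℤ)⟧, ξ ≫ β⟦(1 : ℤ)⟧' = d := by
  obtain ⟨U, x, u, hU⟩ := Pretriangulated.distinguished_cocone_triangle β
  have hβx : β ≫ x = 0 := comp_distTriang_mor_zero₁₂ _ hU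
  -- `x` is not a section
  have hxs : ¬(∃ v : U ⟶ X, x ≫ v = 𝟙 X) := by
    rintro ⟨v, hv⟩
    apply hβ
    calc β = β ≫ 𝟙 X := (Category.comp_id _).symm
      _ = β ≫ x ≫ v := by rw [hv]
      _ = (β ≫ x) ≫ v := (Category.assoc _ _ _).symm
      _ = 0 := by rw [hβx, zero_comp]
  obtain ⟨w, hw⟩ := hAR.2.2.1 U x hxs
  -- `d ≫ Σf = 0`
  have hdf : d ≫ f⟦(1 : ℤ)⟧' = 0 := by
    have h3 : d ≫ (-(f⟦(1 : ℤ)⟧')) = 0 :=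
      comp_distTriang_mor_zero₂₃ _ (rot_of_distTriang _ hAR.1)
    rw [Preadditive.comp_neg, neg_eq_zero] at h3
    exact h3
  have hdx : d ≫ x⟦(1 : ℤ)⟧' = 0 := by
    rw [← hw, Functor.map_comp, ← Category.assoc, hdf, zero_comp]
  obtain ⟨ξ₀, hξ₀⟩ := Triangle.coyoneda_exact₁ _ (rot_of_distTriang _ hU) d hdx
  have h4 : d = ξ₀ ≫ (-(β⟦(1 : ℤ)⟧')) := hξ₀
  replace h4 : d = -(ξ₀ ≫ β⟦(1 : ℤ)⟧') := h4.trans (Preadditive.comp_neg _ _)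
  refine ⟨-ξ₀, ?_⟩
  exact (Preadditive.neg_comp _ _).trans h4.symm

/-- Wakamatsu-type injectivity: if `α : A ⟶ X` is an `S`-cover and `C ∈ S`, then
post-composition with `Σα` is injective on `Hom(C, ΣA)`. -/
lemma wakamatsu_injective (S : Set T)
    (hiso : ∀ {X Y : T}, (X ≅ Y) → X ∈ S → Y ∈ S)
    (hext : ∀ {A B C : T} (f : A ⟶ B) (g : B ⟶ C) (h : C ⟶ A⟦(1 : ℤ)⟧),
      Triangle.mk f g h ∈ (distTriang T) → A ∈ S → C ∈ S → B ∈ S)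
    {X A C : T} (hC : C ∈ S) (α : A ⟶ X) (hα : IsCover S α)
    (ξ : C ⟶ A⟦(1 : ℤ)⟧) (hξ : ξ ≫ α⟦(1 : ℤ)⟧' = 0) : ξ = 0 := by
  set κ := shiftFunctorCompIsoId T (1 : ℤ) (-1 : ℤ) (by omega) with hκ
  have hnat : κ.hom.app A ≫ α = ((α⟦(1 : ℤ)⟧')⟦(-1 : ℤ)⟧') ≫ κ.hom.app X := by
    simpa using (κ.hom.naturality α).symm
  have hbara : (ξ⟦(-1 : ℤ)⟧' ≫ κ.hom.app A) ≫ α = 0 := by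
    rw [Category.assoc, hnat, ← Category.assoc, ← Functor.map_comp, hξ,
      Functor.map_zero, zero_comp]
  obtain ⟨E, ι, π, hT0⟩ :=
    Pretriangulated.distinguished_cocone_triangle (ξ⟦(-1 : ℤ)⟧' ≫ κ.hom.app A)
  -- `E` is an extension of `C⟦-1⟧⟦1⟧ ≅ C` by `A`, hence lies in `S`
  have hCshift : ((C⟦(-1 : ℤ)⟧)⟦(1 : ℤ)⟧) ∈ S :=
    hiso ((shiftFunctorCompIsoId T (-1 : ℤ) (1 : ℤ) (by omega)).app C).symm hC
  have hES : E ∈ S :=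
    hext ι π (-((ξ⟦(-1 : ℤ)⟧' ≫ κ.hom.app A)⟦(1 : ℤ)⟧'))
      (rot_of_distTriang _ hT0) hα.1.1 hCshift
  -- extend `α` over `ι`
  obtain ⟨θ, hθ⟩ := Triangle.yoneda_exact₂ _ hT0 α hbara
  obtain ⟨τ, hτ⟩ := hα.1.2 E hES θ
  have hcomp : (ι ≫ τ) ≫ α = α := by
    rw [Category.assoc, hτ]; exact hθ.symm
  haveI : IsIso (ι ≫ τ) := hα.2 _ hcomp
  have h12 : (ξ⟦(-1 : ℤ)⟧' ≫ κ.hom.app A) ≫ ι = 0 := comp_distTriang_mor_zero₁₂ _ hT0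
  have hbar0 : ξ⟦(-1 : ℤ)⟧' ≫ κ.hom.app A = 0 := by
    have hz : (ξ⟦(-1 : ℤ)⟧' ≫ κ.hom.app A) ≫ (ι ≫ τ) = 0 := by
      rw [← Category.assoc, h12, zero_comp]
    calc ξ⟦(-1 : ℤ)⟧' ≫ κ.hom.app A
        = ((ξ⟦(-1 : ℤ)⟧' ≫ κ.hom.app A) ≫ (ι ≫ τ)) ≫ inv (ι ≫ τ) := by
          rw [Category.assoc, IsIso.hom_inv_id, Category.comp_id]
      _ = 0 := by rw [hz, zero_comp]
  have hm : ξ⟦(-1 : ℤ)⟧' = 0 := by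
    have hz2 : ξ⟦(-1 : ℤ)⟧' ≫ κ.hom.app A = 0 ≫ κ.hom.app A := by
      rw [hbar0, zero_comp]
    exact (cancel_mono (κ.hom.app A)).1 hz2
  apply (shiftFunctor T (-1 : ℤ)).map_injective
  rw [Functor.map_zero]
  exact hm

/-- If a summand inclusion composes to zero with a cover, the summand is zero. -/
lemma summand_zero_of_comp_zero {A A₁ A₂ X : T} (α : A ⟶ X)
    (hmin : ∀ f : A ⟶ A, f ≫ α = α → IsIso f)
    (i₁ : A₁ ⟶ A) (i₂ : A₂ ⟶ A) (p₁ : A ⟶ A₁) (p₂ : A ⟶ A₂)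
    (h11 : i₁ ≫ p₁ = 𝟙 A₁) (h22 : i₂ ≫ p₂ = 𝟙 A₂) (h12 : i₁ ≫ p₂ = 0)
    (hsum1 : p₁ ≫ i₁ + p₂ ≫ i₂ = 𝟙 A) (h1 : i₁ ≫ α = 0) :
    Limits.IsZero A₁ := by
  have hadd : (p₁ ≫ i₁) ≫ α + (p₂ ≫ i₂) ≫ α = α := by
    rw [← Preadditive.add_comp, hsum1, Category.id_comp]
  have hz : (p₁ ≫ i₁) ≫ α = 0 := by
    rw [Category.assoc, h1, comp_zero]
  rw [hz, zero_add] at hadd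
  haveI : IsIso (p₂ ≫ i₂) := hmin _ hadd
  have hidem : (p₂ ≫ i₂) ≫ (p₂ ≫ i₂) = (p₂ ≫ i₂) ≫ 𝟙 A := by
    rw [Category.comp_id]
    calc (p₂ ≫ i₂) ≫ p₂ ≫ i₂ = p₂ ≫ (i₂ ≫ p₂) ≫ i₂ := by
          simp only [Category.assoc]
      _ = p₂ ≫ i₂ := by rw [h22, Category.id_comp]
  have heq : p₂ ≫ i₂ = 𝟙 A := (cancel_epi (p₂ ≫ i₂)).1 hidem
  have hi₁ : i₁ = 0 := by
    calc i₁ = i₁ ≫ 𝟙 A := (Category.comp_id _).symm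
      _ = i₁ ≫ p₂ ≫ i₂ := by rw [heq]
      _ = (i₁ ≫ p₂) ≫ i₂ := (Category.assoc _ _ _).symm
      _ = 0 := by rw [h12, zero_comp]
  rw [IsZero.iff_id_eq_zero, ← h11, hi₁, zero_comp]

/-- If `C` lies in `S`, `X ⟶ Y ⟶ C --d--> ΣX` is an Auslander-Reiten triangle in `T` and
`α : A ⟶ X` is an `S`-cover, then `A` is either zero or indecomposable. -/
theorem cover_zero_or_indecomposable (S : Set T)
    [EssentiallySmall.{v} T] [IsIdempotentComplete T]
    (hfd : ∀ X Y : T, FiniteDimensional k (X ⟶ Y))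
    (hiso : ∀ {X Y : T}, (X ≅ Y) → X ∈ S → Y ∈ S)
    (hext : ∀ {A B C : T} (f : A ⟶ B) (g : B ⟶ C) (h : C ⟶ A⟦(1 : ℤ)⟧),
      Triangle.mk f g h ∈ (distTriang T) → A ∈ S → C ∈ S → B ∈ S)
    (hsum : ∀ {A A₁ : T} (i : A₁ ⟶ A) (p : A ⟶ A₁), i ≫ p = 𝟙 A₁ → A ∈ S → A₁ ∈ S)
    {X Y C A : T} (hC : C ∈ S)
    (f : X ⟶ Y) (g : Y ⟶ C) (d : C ⟶ X⟦(1 : ℤ)⟧) (hAR : IsARTriangle f g d)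
    (α : A ⟶ X) (hα : IsCover S α) :
    Limits.IsZero A ∨ (¬ Limits.IsZero A ∧
      ∀ (A₁ A₂ : T) (i₁ : A₁ ⟶ A) (i₂ : A₂ ⟶ A) (p₁ : A ⟶ A₁) (p₂ : A ⟶ A₂),
        i₁ ≫ p₁ = 𝟙 A₁ → i₂ ≫ p₂ = 𝟙 A₂ → i₁ ≫ p₂ = 0 → i₂ ≫ p₁ = 0 →
        p₁ ≫ i₁ + p₂ ≫ i₂ = 𝟙 A → Limits.IsZero A₁ ∨ Limits.IsZero A₂) := by
  by_cases hA : Limits.IsZero A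
  · exact Or.inl hA
  refine Or.inr ⟨hA, ?_⟩
  intro A₁ A₂ i₁ i₂ p₁ p₂ h11 h22 h12 h21 hsum1
  by_cases h1 : i₁ ≫ α = 0
  · exact Or.inl (summand_zero_of_comp_zero α hα.2 i₁ i₂ p₁ p₂ h11 h22 h12 hsum1 h1)
  by_cases h2 : i₂ ≫ α = 0
  · refine Or.inr (summand_zero_of_comp_zero α hα.2 i₂ i₁ p₂ p₁ h22 h11 h21 ?_ h2)
    rw [add_comm]; exact hsum1
  exfalso
  obtain ⟨ξ₁, hξ₁⟩ := ar_factor_through_shift hAR (i₁ ≫ α) h1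
  obtain ⟨ξ₂, hξ₂⟩ := ar_factor_through_shift hAR (i₂ ≫ α) h2
  have hξ₁' : (ξ₁ ≫ i₁⟦(1 : ℤ)⟧') ≫ α⟦(1 : ℤ)⟧' = d := by
    rw [Category.assoc, ← Functor.map_comp]; exact hξ₁
  have hξ₂' : (ξ₂ ≫ i₂⟦(1 : ℤ)⟧') ≫ α⟦(1 : ℤ)⟧' = d := by
    rw [Category.assoc, ← Functor.map_comp]; exact hξ₂
  have hsub : (ξ₁ ≫ i₁⟦(1 : ℤ)⟧' - ξ₂ ≫ i₂⟦(1 : ℤ)⟧') ≫ α⟦(1 : ℤ)⟧' = 0 := by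
    rw [Preadditive.sub_comp, hξ₁', hξ₂', sub_self]
  have h0 := wakamatsu_injective S hiso hext hC α hα _ hsub
  have heq : ξ₁ ≫ i₁⟦(1 : ℤ)⟧' = ξ₂ ≫ i₂⟦(1 : ℤ)⟧' := sub_eq_zero.mp h0
  have hξ₁0 : ξ₁ = 0 := by
    calc ξ₁ = ξ₁ ≫ 𝟙 (A₁⟦(1 : ℤ)⟧) := (Category.comp_id _).symm
      _ = ξ₁ ≫ (i₁ ≫ p₁)⟦(1 : ℤ)⟧' := by rw [h11, CategoryTheory.Functor.map_id]
      _ = (ξ₁ ≫ i₁⟦(1 : ℤ)⟧') ≫ p₁⟦(1 : ℤ)⟧' := by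
          rw [Functor.map_comp, Category.assoc]
      _ = (ξ₂ ≫ i₂⟦(1 : ℤ)⟧') ≫ p₁⟦(1 : ℤ)⟧' := by rw [heq]
      _ = ξ₂ ≫ (i₂ ≫ p₁)⟦(1 : ℤ)⟧' := by rw [Functor.map_comp, Category.assoc]
      _ = 0 := by rw [h21, Functor.map_zero, comp_zero]
  exact hAR.2.1 (by rw [← hξ₁, hξ₁0, zero_comp])
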